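/- Let S be a left cancellative monoid, R a ring with an S-grading of support size d, and suppose the neutral element e is not in the support. Then for every g in the support, (R_g)^{d+1} = 0. -/

import Mathlib

/-- Product `a * l₀ * l₁ * ⋯` of a nonempty list of ring elements. -/
def mulList {R : Type*} [Mul R] (a : R) (l : List R) : R := l.foldl (· * ·) a

/-- `pw a n` is `aⁿ` for `n ≥ 1` (junk value `0` at `n = 0`). -/
def pw {R : Type*} [Mul R] [Zero R] (a : R) : ℕ → R
  | 0 => 0
  | 1 => a
  | n + 2 => pw a (n + 1) * a

/-- Product of `n` elements given by `f` (junk `0` when `n = 0`). -/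
def finProd {R : Type*} [Mul R] [Zero R] : {n : ℕ} → (Fin n → R) → R
  | 0, _ => 0
  | n + 1, f => mulList (f 0) (List.ofFn fun i : Fin n => f i.succ)

/-- `R ^ n = 0`: every product of `n` elements of `R` vanishes. -/
def PowZero (R : Type*) [Mul R] [Zero R] (n : ℕ) : Prop :=
  ∀ (a : R) (l : List R), l.length + 1 = n → mulList a l = 0

/-- `T ^ n = 0` for a subset `T` of a ring. -/
def PowZeroOn {R : Type*} [Mul R] [Zero R] (T : Set R) (n : ℕ) : Prop :=
  ∀ (a : R) (l : List R), a ∈ T → (∀ x ∈ l, x ∈ T) → l.length + 1 = n → mulList a l = 0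

/-- `a` is nilpotent: `aⁿ = 0` for some `n ≥ 1`. -/
def IsNilE {R : Type*} [Mul R] [Zero R] (a : R) : Prop := ∃ n, 1 ≤ n ∧ pw a n = 0

/-- A nil ring: every element is nilpotent. -/
def IsNilRing (R : Type*) [Mul R] [Zero R] : Prop := ∀ a : R, IsNilE a

/-- An `S`-grading of the ring `R`: a direct sum decomposition into additive
subgroups with `R_g R_h ⊆ R_{gh}`. -/
structure IsGrading {S R : Type*} [Monoid S] [NonUnitalRing R] [DecidableEq S]
    (A : S → AddSubgroup R) : Prop where
  mul_mem : ∀ {g h : S} {x y : R}, x ∈ A g → y ∈ A h → x * y ∈ A (g * h)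
  isInternal : DirectSum.IsInternal A

/-- Grading by an additively written monoid. -/
structure IsAddGrading {S R : Type*} [AddMonoid S] [NonUnitalRing R] [DecidableEq S]
    (A : S → AddSubgroup R) : Prop where
  mul_mem : ∀ {g h : S} {x y : R}, x ∈ A g → y ∈ A h → x * y ∈ A (g + h)
  isInternal : DirectSum.IsInternal A

/-- The subset `T` of a ring is `f`-commutative: there are a semigroup `G` acting on it
from the left and a map `f` with `a*b = f(a,b)·(b*a)`. -/
def IsFCommutativeOn {R : Type*} [Mul R] (T : Set R) : Prop :=
  ∃ (G : Type) (_ : Semigroup G) (act : G → R → R),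
    (∀ l m : G, ∀ x : R, x ∈ T → act (l * m) x = act l (act m x)) ∧
    (∀ l : G, ∀ x : R, x ∈ T → act l x ∈ T) ∧
    (∀ l : G, ∀ x y : R, x ∈ T → y ∈ T → act l (x * y) = act l x * y) ∧
    ∃ f : R → R → G, ∀ a b : R, a ∈ T → b ∈ T → a * b = act (f a b) (b * a)

/-- The ring `R` is `f`-commutative. -/
def IsFCommutative (R : Type*) [Mul R] : Prop :=
  ∃ (G : Type) (_ : Semigroup G) (act : G → R → R),
    (∀ l m : G, ∀ x : R, act (l * m) x = act l (act m x)) ∧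
    (∀ l : G, ∀ x y : R, act l (x * y) = act l x * y) ∧
    ∃ f : R → R → G, ∀ a b : R, a * b = act (f a b) (b * a)

/-- The order of `g`: least `n ≥ 1` with `gⁿ = 1`, and `0` if no such `n` exists. -/
noncomputable def ordOf {S : Type*} [Monoid S] (g : S) : ℕ := sInf {n | 1 ≤ n ∧ g ^ n = 1}

lemma mulList_zero {R : Type*} [NonUnitalRing R] (l : List R) : mulList (0 : R) l = 0 := by
  induction l with
  | nil => rfl
  | cons x xs ih =>
    show mulList (0 * x) xs = 0
    rw [zero_mul]; exact ih

lemma mulList_append {R : Type*} [Mul R] (a : R) (l₁ l₂ : List R) :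
    mulList a (l₁ ++ l₂) = mulList (mulList a l₁) l₂ := by
  simp [mulList, List.foldl_append]

lemma mulList_mem {S R : Type*} [Monoid S] [DecidableEq S] [NonUnitalRing R]
    {A : S → AddSubgroup R} (hA : IsGrading A) (g : S) :
    ∀ (l : List R) (a : R) (s : S), a ∈ A s → (∀ x ∈ l, x ∈ (A g : Set R)) →
      mulList a l ∈ A (s * g ^ l.length) := by
  intro l
  induction l with
  | nil => intro a s ha _; simpa [mulList] using ha
  | cons x xs ih =>
    intro a s ha hl
    have hx : x ∈ A g := hl x (by simp)
    have := ih (a * x) (s * g) (hA.mul_mem ha hx) (fun y hy => hl y (by simp [hy]))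
    have hdeg : s * g * g ^ xs.length = s * g ^ (x :: xs).length := by
      rw [List.length_cons, pow_succ']
      rw [mul_assoc]
    rwa [hdeg] at this

theorem stmt_19 {S R : Type*} [Monoid S] [IsLeftCancelMul S] [DecidableEq S]
    [NonUnitalRing R] (A : S → AddSubgroup R) (hA : IsGrading A)
    (d : ℕ) (hfin : {g : S | A g ≠ ⊥}.Finite) (hcard : hfin.toFinset.card = d)
    (he : A 1 = ⊥) :
    ∀ g : S, A g ≠ ⊥ → PowZeroOn (A g : Set R) (d + 1) := by
  intro g hg a l ha hl hlen
  by_contra hne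
  have hlen' : l.length = d := by omega
  have hpre : ∀ k, mulList a (l.take k) ≠ 0 := by
    intro k h0
    apply hne
    have heq : l = l.take k ++ l.drop k := (List.take_append_drop k l).symm
    rw [heq, mulList_append, h0, mulList_zero]
  have hmem : ∀ k, k ≤ d → mulList a (l.take k) ∈ A (g ^ (k + 1)) := by
    intro k hk
    have h := mulList_mem hA g (l.take k) a g ha
      (fun x hx => hl x (List.mem_of_mem_take hx))
    rw [List.length_take, hlen', min_eq_left hk, ← pow_succ'] at h
    exact h
  have hsupp : ∀ k : Fin (d + 1), g ^ (k.val + 1) ∈ hfin.toFinset := by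
    intro k
    rw [Set.Finite.mem_toFinset]
    intro hbot
    have hmk := hmem k.val (by omega)
    rw [hbot, AddSubgroup.mem_bot] at hmk
    exact hpre k.val hmk
  obtain ⟨i, -, j, -, hij, hfij⟩ :=
    Finset.exists_ne_map_eq_of_card_lt_of_maps_to
      (s := (Finset.univ : Finset (Fin (d + 1)))) (t := hfin.toFinset)
      (f := fun k => g ^ (k.val + 1)) (by simp [hcard]) (fun k _ => hsupp k)
  -- wlog i.val < j.val
  rcases lt_or_gt_of_ne (fun h => hij (Fin.ext h) : i.val ≠ j.val) with hlt | hlt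
  all_goals {
    first
      | (have key : g ^ (i.val + 1) * g ^ (j.val - i.val) = g ^ (i.val + 1) * 1 := by
          rw [mul_one, ← pow_add]
          rw [show i.val + 1 + (j.val - i.val) = j.val + 1 by omega]
          exact hfij.symm
         have hm1 : g ^ (j.val - i.val) = 1 := mul_left_cancel key
         have hmle : j.val - i.val - 1 ≤ d := by omega
         have := hmem (j.val - i.val - 1) hmle
         rw [show j.val - i.val - 1 + 1 = j.val - i.val by omega, hm1, he,
           AddSubgroup.mem_bot] at this
         exact hpre (j.val - i.val - 1) this)
      | (have key : g ^ (j.val + 1) * g ^ (i.val - j.val) = g ^ (j.val + 1) * 1 := by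
          rw [mul_one, ← pow_add]
          rw [show j.val + 1 + (i.val - j.val) = i.val + 1 by omega]
          exact hfij
         have hm1 : g ^ (i.val - j.val) = 1 := mul_left_cancel key
         have hmle : i.val - j.val - 1 ≤ d := by omega
         have := hmem (i.val - j.val - 1) hmle
         rw [show i.val - j.val - 1 + 1 = i.val - j.val by omega, hm1, he,
           AddSubgroup.mem_bot] at this
         exact hpre (i.val - j.val - 1) this) }
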